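/- The function ω(z) = 1/(e^z + 1) satisfies, for every z ∈ ℂ at which all terms are defined, the identity (ω(z)·ω(z+1) − 1)·(ω(z)·ω(z−1) − 1) + 2·S(ω,z) = P(ω(z))/Q(ω(z)), where P(w) = e·w⁴ + (e−1)²·w³ − (e²+1)·w² and Q(w) = −(e−1)²·w² + (e−1)²·w + e, with e = exp(1). -/

import Mathlib

open Real

noncomputable section

/-- The Schwarzian derivative `S(f,z) = f'''/f' - (3/2) (f''/f')²`. -/
def schwarzian (f : ℂ → ℂ) (z : ℂ) : ℂ :=
  iteratedDeriv 3 f z / deriv f z - (3 / 2) * (iteratedDeriv 2 f z / deriv f z) ^ 2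

/-- The numerator polynomial of Example `exm 6` of the paper, with `e = exp 1`. -/
def P18 (w : ℂ) : ℂ :=
  ((Real.exp 1 : ℝ) : ℂ) * w ^ 4 + (((Real.exp 1 : ℝ) : ℂ) - 1) ^ 2 * w ^ 3
    - (((Real.exp 1 : ℝ) : ℂ) ^ 2 + 1) * w ^ 2

/-- The denominator polynomial of Example `exm 6` of the paper, with `e = exp 1`. -/
def Q18 (w : ℂ) : ℂ :=
  -(((Real.exp 1 : ℝ) : ℂ) - 1) ^ 2 * w ^ 2 + (((Real.exp 1 : ℝ) : ℂ) - 1) ^ 2 * w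
    + ((Real.exp 1 : ℝ) : ℂ)

lemma d1 {w : ℂ} (h : Complex.exp w + 1 ≠ 0) :
    deriv (fun w : ℂ => (Complex.exp w + 1)⁻¹) w
      = -Complex.exp w / (Complex.exp w + 1) ^ 2 := by
  have hd := ((Complex.differentiable_exp w).hasDerivAt.add_const 1).inv h
  rw [show deriv (fun w : ℂ => (Complex.exp w + 1)⁻¹) w = _ from hd.deriv, Complex.deriv_exp]

lemma d2 {w : ℂ} (h : Complex.exp w + 1 ≠ 0) :
    deriv (fun w : ℂ => -Complex.exp w / (Complex.exp w + 1) ^ 2) w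
      = (Complex.exp w ^ 2 - Complex.exp w) / (Complex.exp w + 1) ^ 3 := by
  have hd := ((Complex.differentiable_exp w).hasDerivAt.neg).div
      (((Complex.differentiable_exp w).hasDerivAt.add_const 1).pow 2) (pow_ne_zero 2 h)
  rw [show deriv (fun w : ℂ => -Complex.exp w / (Complex.exp w + 1) ^ 2) w = _ from hd.deriv,
    Complex.deriv_exp]
  simp only [Pi.pow_apply, Pi.neg_apply, Pi.sub_apply, Nat.cast_ofNat]
  field_simp
  ring

lemma d3 {w : ℂ} (h : Complex.exp w + 1 ≠ 0) :
    deriv (fun w : ℂ => (Complex.exp w ^ 2 - Complex.exp w) / (Complex.exp w + 1) ^ 3) w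
      = (-Complex.exp w ^ 3 + 4 * Complex.exp w ^ 2 - Complex.exp w)
        / (Complex.exp w + 1) ^ 4 := by
  have hd := ((((Complex.differentiable_exp w).hasDerivAt.pow 2).sub
      (Complex.differentiable_exp w).hasDerivAt)).div
      (((Complex.differentiable_exp w).hasDerivAt.add_const 1).pow 3) (pow_ne_zero 3 h)
  rw [show deriv (fun w : ℂ => (Complex.exp w ^ 2 - Complex.exp w) / (Complex.exp w + 1) ^ 3) w
    = _ from hd.deriv, Complex.deriv_exp]
  simp only [Pi.pow_apply, Pi.neg_apply, Pi.sub_apply, Nat.cast_ofNat]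
  field_simp
  ring

lemma schw_val {z : ℂ} (h1 : Complex.exp z + 1 ≠ 0) :
    schwarzian (fun w : ℂ => (Complex.exp w + 1)⁻¹) z = -(1/2) := by
  have hev : ∀ᶠ w in nhds z, Complex.exp w + 1 ≠ 0 :=
    (Complex.continuous_exp.add continuous_const).continuousAt.eventually_ne h1
  have e1 : deriv (fun w : ℂ => (Complex.exp w + 1)⁻¹)
      =ᶠ[nhds z] fun w => -Complex.exp w / (Complex.exp w + 1) ^ 2 :=
    hev.mono fun w hw => d1 hw
  have e2 : deriv (deriv (fun w : ℂ => (Complex.exp w + 1)⁻¹))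
      =ᶠ[nhds z] fun w => (Complex.exp w ^ 2 - Complex.exp w) / (Complex.exp w + 1) ^ 3 := by
    refine (e1.deriv).trans (hev.mono fun w hw => d2 hw)
  have i2 : iteratedDeriv 2 (fun w : ℂ => (Complex.exp w + 1)⁻¹) z
      = (Complex.exp z ^ 2 - Complex.exp z) / (Complex.exp z + 1) ^ 3 := by
    rw [show (2:ℕ) = 1 + 1 from rfl, iteratedDeriv_succ, iteratedDeriv_one]
    exact e2.self_of_nhds
  have i3 : iteratedDeriv 3 (fun w : ℂ => (Complex.exp w + 1)⁻¹) z
      = (-Complex.exp z ^ 3 + 4 * Complex.exp z ^ 2 - Complex.exp z)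
        / (Complex.exp z + 1) ^ 4 := by
    rw [show iteratedDeriv 3 (fun w : ℂ => (Complex.exp w + 1)⁻¹)
      = deriv (iteratedDeriv 2 (fun w : ℂ => (Complex.exp w + 1)⁻¹)) from iteratedDeriv_succ]
    have : iteratedDeriv 2 (fun w : ℂ => (Complex.exp w + 1)⁻¹)
        =ᶠ[nhds z] fun w => (Complex.exp w ^ 2 - Complex.exp w) / (Complex.exp w + 1) ^ 3 := by
      have : iteratedDeriv 2 (fun w : ℂ => (Complex.exp w + 1)⁻¹)
          = deriv (deriv (fun w : ℂ => (Complex.exp w + 1)⁻¹)) := by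
        rw [show (2:ℕ) = 1 + 1 from rfl, iteratedDeriv_succ, iteratedDeriv_one]
      rw [this]; exact e2
    rw [this.deriv.self_of_nhds]
    exact d3 h1
  have hu : Complex.exp z ≠ 0 := Complex.exp_ne_zero z
  rw [schwarzian, i2, i3, d1 h1]
  have q1 : (-Complex.exp z ^ 3 + 4 * Complex.exp z ^ 2 - Complex.exp z) / (Complex.exp z + 1) ^ 4
      / (-Complex.exp z / (Complex.exp z + 1) ^ 2)
      = (Complex.exp z ^ 2 - 4 * Complex.exp z + 1) / (Complex.exp z + 1) ^ 2 := by
    rw [div_eq_mul_inv _ (-Complex.exp z / (Complex.exp z + 1) ^ 2), inv_div,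
      div_mul_div_comm, div_eq_div_iff (mul_ne_zero (pow_ne_zero 4 h1) (neg_ne_zero.2 hu)) (pow_ne_zero 2 h1)]
    ring
  have q2 : (Complex.exp z ^ 2 - Complex.exp z) / (Complex.exp z + 1) ^ 3
      / (-Complex.exp z / (Complex.exp z + 1) ^ 2)
      = -(Complex.exp z - 1) / (Complex.exp z + 1) := by
    rw [div_eq_mul_inv _ (-Complex.exp z / (Complex.exp z + 1) ^ 2), inv_div,
      div_mul_div_comm, div_eq_div_iff (mul_ne_zero (pow_ne_zero 3 h1) (neg_ne_zero.2 hu)) h1]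
    ring
  rw [q1, q2]
  field_simp
  ring

/-- `ω(z) = 1/(eᶻ + 1)` satisfies
`(ω(z)ω(z+1) - 1)(ω(z)ω(z-1) - 1) + 2·S(ω,z) = P(ω(z))/Q(ω(z))`
wherever all terms are defined. -/
theorem stmt_18 (z : ℂ)
    (h1 : Complex.exp z + 1 ≠ 0)
    (h2 : Complex.exp (z + 1) + 1 ≠ 0)
    (h3 : Complex.exp (z - 1) + 1 ≠ 0)
    (h4 : deriv (fun w : ℂ => (Complex.exp w + 1)⁻¹) z ≠ 0)
    (h5 : Q18 ((Complex.exp z + 1)⁻¹) ≠ 0) :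
    ((Complex.exp z + 1)⁻¹ * (Complex.exp (z + 1) + 1)⁻¹ - 1)
        * ((Complex.exp z + 1)⁻¹ * (Complex.exp (z - 1) + 1)⁻¹ - 1)
        + 2 * schwarzian (fun w : ℂ => (Complex.exp w + 1)⁻¹) z
      = P18 ((Complex.exp z + 1)⁻¹) / Q18 ((Complex.exp z + 1)⁻¹) := by
  rw [schw_val h1]
  have he : ((Real.exp 1 : ℝ) : ℂ) = Complex.exp 1 := Complex.ofReal_exp 1
  have he0 : Complex.exp 1 ≠ 0 := Complex.exp_ne_zero 1
  have hu : Complex.exp z ≠ 0 := Complex.exp_ne_zero z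
  have hp : Complex.exp (z + 1) = Complex.exp z * Complex.exp 1 := Complex.exp_add z 1
  have hm : Complex.exp (z - 1) = Complex.exp z / Complex.exp 1 := by
    rw [eq_div_iff he0, ← Complex.exp_add]; ring_nf
  rw [hp] at h2
  rw [hm] at h3
  have hd : Complex.exp z / Complex.exp 1 + 1 = (Complex.exp z + Complex.exp 1) / Complex.exp 1 := by
    field_simp
  have hae : Complex.exp z + Complex.exp 1 ≠ 0 := by
    intro H
    apply h3
    rw [hd, H, zero_div]
  simp only [P18, Q18, he] at h5 ⊢
  rw [hp, hm, hd, inv_div]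
  rw [eq_div_iff h5]
  field_simp
  ring
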